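/- Let 0 < α < 1, let x ∈ C^2[a,b], and let N ≥ 1. Define R_N(τ) = ∑_{p=N+1}^∞ [Γ(p−1+α)/(Γ(α−1)p!)]·((τ−a)/(t−a))^p for a ≤ τ ≤ t ≤ b, and E_tr(t) = ((t−a)^(1−α)/Γ(2−α)) ∫_a^t R_N(τ) x''(τ) dτ. If L₂ = max_{τ∈[a,t]} |x''(τ)|, then |E_tr(t)| ≤ L₂ · e^((1−α)^2+1−α) · (t−a)^(2−α) / (Γ(2−α)(1−α)N^(1−α)). -/

import Mathlib

open MeasureTheory Set

lemma prod_bound {α : ℝ} (hα0 : 0 < α) (hα1 : α < 1) (m : ℕ) :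
    ∏ k ∈ Finset.range m, (((k:ℝ)+α)/((k:ℝ)+1)) ≤ ((m:ℝ)+1) ^ (α-1) := by
  induction m with
  | zero => simp
  | succ m ih =>
    have hm1 : (0:ℝ) < (m:ℝ)+1 := by positivity
    have hm2 : (0:ℝ) < (m:ℝ)+2 := by positivity
    have hlog : Real.log ((m:ℝ)+2) - Real.log ((m:ℝ)+1) ≤ 1/((m:ℝ)+1) := by
      rw [← Real.log_div (by positivity) (by positivity)]
      have := Real.log_le_sub_one_of_pos (show (0:ℝ) < ((m:ℝ)+2)/((m:ℝ)+1) by positivity)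
      have h2 : ((m:ℝ)+2)/((m:ℝ)+1) - 1 = 1/((m:ℝ)+1) := by field_simp; ring
      linarith
    have hlogpos : 0 ≤ Real.log ((m:ℝ)+2) - Real.log ((m:ℝ)+1) := by
      have := Real.log_le_log hm1 (by linarith : (m:ℝ)+1 ≤ (m:ℝ)+2)
      linarith
    have key2 : (m:ℝ)+α ≤ ((m:ℝ)+2)^(α-1) * ((m:ℝ)+1)^(2-α) := by
      rw [Real.rpow_def_of_pos hm2, Real.rpow_def_of_pos hm1, ← Real.exp_add]
      have heq : Real.log ((m:ℝ)+2) * (α-1) + Real.log ((m:ℝ)+1) * (2-α)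
          = Real.log ((m:ℝ)+1) + (α-1) * (Real.log ((m:ℝ)+2) - Real.log ((m:ℝ)+1)) := by ring
      rw [heq, Real.exp_add, Real.exp_log hm1]
      have h1 : (α-1) * (Real.log ((m:ℝ)+2) - Real.log ((m:ℝ)+1)) + 1
          ≤ Real.exp ((α-1) * (Real.log ((m:ℝ)+2) - Real.log ((m:ℝ)+1))) :=
        Real.add_one_le_exp _
      have h2 : (α-1)/((m:ℝ)+1) ≤ (α-1) * (Real.log ((m:ℝ)+2) - Real.log ((m:ℝ)+1)) := by
        rw [div_eq_mul_inv, ← one_div]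
        exact mul_le_mul_of_nonpos_left hlog (by linarith)
      have h3 : ((m:ℝ)+1) * ((α-1)/((m:ℝ)+1)) = α-1 := by field_simp
      nlinarith [mul_le_mul_of_nonneg_left h1 hm1.le, mul_le_mul_of_nonneg_left h2 hm1.le]
    have key : ((m:ℝ)+1)^(α-1) * (((m:ℝ)+α)/((m:ℝ)+1)) ≤ ((m:ℝ)+2)^(α-1) := by
      have e1 : ((m:ℝ)+1)^(α-1) * (((m:ℝ)+α)/((m:ℝ)+1)) = ((m:ℝ)+α) * ((m:ℝ)+1)^(α-2) := by
        rw [show (α-2 : ℝ) = (α-1) + (-1) by ring, Real.rpow_add hm1, Real.rpow_neg_one]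
        field_simp
      rw [e1, show (α-2 : ℝ) = -(2-α) by ring, Real.rpow_neg hm1.le, mul_comm,
        inv_mul_le_iff₀ (by positivity)]
      calc (m:ℝ)+α ≤ ((m:ℝ)+2)^(α-1) * ((m:ℝ)+1)^(2-α) := key2
        _ = ((m:ℝ)+1)^(2-α) * ((m:ℝ)+2)^(α-1) := by ring
    rw [Finset.prod_range_succ]
    push_cast
    calc (∏ k ∈ Finset.range m, (((k:ℝ)+α)/((k:ℝ)+1))) * (((m:ℝ)+α)/((m:ℝ)+1))
        ≤ ((m:ℝ)+1)^(α-1) * (((m:ℝ)+α)/((m:ℝ)+1)) := by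
          apply mul_le_mul_of_nonneg_right ih
          positivity
      _ ≤ ((m:ℝ)+2)^(α-1) := key
      _ = ((m:ℝ)+1+1)^(α-1) := by rw [show ((m:ℝ)+1+1) = (m:ℝ)+2 by ring]

lemma gamma_prod {α : ℝ} (hα0 : 0 < α) (hα1 : α < 1) : ∀ n : ℕ,
    Real.Gamma (α - 1 + n) = Real.Gamma (α - 1) * ∏ k ∈ Finset.range n, (α - 1 + (k:ℝ))
  | 0 => by simp
  | (n+1) => by
    have hne : α - 1 + (n:ℝ) ≠ 0 := by
      rcases Nat.eq_zero_or_pos n with h | h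
      · subst h; push_cast; intro hc; linarith
      · have : (1:ℝ) ≤ (n:ℝ) := by exact_mod_cast h
        intro hc; linarith
    have heq : α - 1 + ((n:ℕ)+1 : ℕ) = (α - 1 + (n:ℝ)) + 1 := by push_cast; ring
    rw [heq, Real.Gamma_add_one hne, gamma_prod hα0 hα1 n, Finset.prod_range_succ]
    ring

lemma coeff_bound {α : ℝ} (hα0 : 0 < α) (hα1 : α < 1) (p : ℕ) (hp : 1 ≤ p) :
    |Real.Gamma ((p:ℝ) - 1 + α) / (Real.Gamma (α - 1) * (p.factorial : ℝ))| ≤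
      (1 - α) * (p:ℝ) ^ (α - 2) := by
  obtain ⟨m, rfl⟩ : ∃ m, p = m + 1 := ⟨p - 1, by omega⟩
  have hΓne : Real.Gamma (α - 1) ≠ 0 := by
    apply Real.Gamma_ne_zero
    intro k
    rcases Nat.eq_zero_or_pos k with h | h
    · subst h; push_cast; intro hc; linarith
    · have : (1:ℝ) ≤ (k:ℝ) := by exact_mod_cast h
      intro hc; linarith
  have hG : Real.Gamma (((m+1:ℕ):ℝ) - 1 + α)
      = Real.Gamma (α-1) * ∏ k ∈ Finset.range (m+1), (α - 1 + (k:ℝ)) := by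
    have h : ((m+1:ℕ):ℝ) - 1 + α = α - 1 + ((m+1:ℕ):ℝ) := by push_cast; ring
    rw [h, gamma_prod hα0 hα1]
  set P := ∏ k ∈ Finset.range m, ((k:ℝ)+α) with hP
  have hPpos : 0 < P := Finset.prod_pos (fun k _ => by positivity)
  have hm1 : (0:ℝ) < (m:ℝ)+1 := by positivity
  have hfacpos : (0:ℝ) < (m.factorial : ℝ) := by exact_mod_cast m.factorial_pos
  have hfac : (((m+1).factorial : ℕ) : ℝ) = ((m:ℝ)+1) * (m.factorial:ℝ) := by
    rw [Nat.factorial_succ]; push_cast; ring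
  have hfacm : (m.factorial : ℝ) = ∏ k ∈ Finset.range m, ((k:ℝ)+1) := by
    rw [← Finset.prod_range_add_one_eq_factorial]; push_cast; rfl
  have hprodsucc : ∏ k ∈ Finset.range (m+1), (α - 1 + (k:ℝ)) = P * (α-1) := by
    rw [Finset.prod_range_succ']
    push_cast
    congr 1
    · exact Finset.prod_congr rfl fun k _ => by ring
    · ring
  rw [hG, hprodsucc, hfac, mul_div_mul_left _ _ hΓne, abs_div, abs_mul,
    abs_of_pos hPpos, abs_of_neg (show α - 1 < 0 by linarith),
    abs_of_pos (by positivity : (0:ℝ) < ((m:ℝ)+1) * (m.factorial:ℝ))]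
  have hPle : P / (m.factorial:ℝ) ≤ ((m:ℝ)+1)^(α-1) := by
    rw [hfacm, ← Finset.prod_div_distrib]; exact prod_bound hα0 hα1 m
  have hrw : ((m+1:ℕ):ℝ) ^ (α-2) = ((m:ℝ)+1)^(α-1) / ((m:ℝ)+1) := by
    push_cast
    rw [show α - 2 = (α-1) - 1 by ring, Real.rpow_sub hm1, Real.rpow_one]
  rw [hrw]
  have h1 : P * -(α-1) / (((m:ℝ)+1) * (m.factorial:ℝ))
      = (1-α)/((m:ℝ)+1) * (P / (m.factorial:ℝ)) := by field_simp; ring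
  rw [h1]
  have h2 : (1-α)/((m:ℝ)+1) * (P / (m.factorial:ℝ)) ≤ (1-α)/((m:ℝ)+1) * ((m:ℝ)+1)^(α-1) := by
    apply mul_le_mul_of_nonneg_left hPle (div_nonneg (by linarith) hm1.le)
  calc (1-α)/((m:ℝ)+1) * (P / (m.factorial:ℝ)) ≤ (1-α)/((m:ℝ)+1) * ((m:ℝ)+1)^(α-1) := h2
    _ = (1-α) * (((m:ℝ)+1)^(α-1) / ((m:ℝ)+1)) := by ring

lemma tail_step {α : ℝ} (hα0 : 0 < α) (hα1 : α < 1) (n : ℕ) (hn : 1 ≤ n) :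
    (1-α) * ((n:ℝ)+1) ^ (α-2) ≤ (n:ℝ) ^ (α-1) - ((n:ℝ)+1) ^ (α-1) := by
  have hn1 : (1:ℝ) ≤ (n:ℝ) := by exact_mod_cast hn
  have hnpos : (0:ℝ) < (n:ℝ) := by linarith
  have hv : (0:ℝ) < (n:ℝ)+1 := by linarith
  have hlog : 1/((n:ℝ)+1) ≤ Real.log ((n:ℝ)+1) - Real.log (n:ℝ) := by
    rw [← Real.log_div (by positivity) (by positivity)]
    have h1 := Real.log_le_sub_one_of_pos (show (0:ℝ) < (n:ℝ)/((n:ℝ)+1) by positivity)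
    have h2 : Real.log ((n:ℝ)/((n:ℝ)+1)) = - Real.log (((n:ℝ)+1)/(n:ℝ)) := by
      rw [← Real.log_inv]; congr 1; field_simp
    have h3 : (n:ℝ)/((n:ℝ)+1) - 1 = -(1/((n:ℝ)+1)) := by field_simp; ring
    linarith
  have key : (1-α) + ((n:ℝ)+1) ≤ (n:ℝ)^(α-1) * ((n:ℝ)+1)^(2-α) := by
    rw [Real.rpow_def_of_pos hnpos, Real.rpow_def_of_pos hv, ← Real.exp_add]
    have heq : Real.log (n:ℝ) * (α-1) + Real.log ((n:ℝ)+1) * (2-α)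
        = Real.log ((n:ℝ)+1) + (1-α) * (Real.log ((n:ℝ)+1) - Real.log (n:ℝ)) := by ring
    rw [heq, Real.exp_add, Real.exp_log hv]
    have h1 := Real.add_one_le_exp ((1-α) * (Real.log ((n:ℝ)+1) - Real.log (n:ℝ)))
    have h2 : (1-α)/((n:ℝ)+1) ≤ (1-α) * (Real.log ((n:ℝ)+1) - Real.log (n:ℝ)) := by
      rw [div_eq_mul_inv, ← one_div]
      exact mul_le_mul_of_nonneg_left hlog (by linarith)
    have h3 : ((n:ℝ)+1) * ((1-α)/((n:ℝ)+1)) = 1-α := by field_simp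
    nlinarith [mul_le_mul_of_nonneg_left h1 hv.le, mul_le_mul_of_nonneg_left h2 hv.le]
  have hm := mul_le_mul_of_nonneg_right key
    (Real.rpow_nonneg hv.le (α-2))
  have e1 : ((1-α) + ((n:ℝ)+1)) * ((n:ℝ)+1)^(α-2)
      = (1-α) * ((n:ℝ)+1)^(α-2) + ((n:ℝ)+1)^(α-1) := by
    have : ((n:ℝ)+1) * ((n:ℝ)+1)^(α-2) = ((n:ℝ)+1)^(α-1) := by
      rw [show α - 1 = 1 + (α-2) by ring, Real.rpow_add hv, Real.rpow_one]
    nlinarith [this]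
  have e2 : (n:ℝ)^(α-1) * ((n:ℝ)+1)^(2-α) * ((n:ℝ)+1)^(α-2) = (n:ℝ)^(α-1) := by
    rw [mul_assoc, ← Real.rpow_add hv]
    norm_num
  rw [e1, e2] at hm
  linarith

set_option maxHeartbeats 1000000 in
lemma tail_sum {α : ℝ} (hα0 : 0 < α) (hα1 : α < 1) (N : ℕ) (hN : 1 ≤ N) :
    ∑' q : ℕ, (1-α) * ((q:ℝ)+(N:ℝ)+1) ^ (α-2) ≤ (N:ℝ) ^ (α-1) := by
  have hsummable : Summable (fun q : ℕ => (1-α) * ((q:ℝ)+(N:ℝ)+1) ^ (α-2)) := by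
    have h0 : Summable (fun n : ℕ => (n:ℝ) ^ (α-2)) :=
      Real.summable_nat_rpow.mpr (by linarith)
    have h1 : Summable (fun q : ℕ => ((q + (N+1) : ℕ) : ℝ) ^ (α-2)) :=
      (summable_nat_add_iff (N+1)).mpr h0
    have h2 : Summable (fun q : ℕ => ((q:ℝ)+(N:ℝ)+1) ^ (α-2)) := by
      convert h1 using 2 with q
      push_cast; ring
    exact h2.mul_left _
  apply Summable.tsum_le_of_sum_range_le hsummable
  intro M
  have hstep : ∀ q ∈ Finset.range M, (1-α) * ((q:ℝ)+(N:ℝ)+1) ^ (α-2)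
      ≤ (((q:ℝ)+(N:ℝ)) ^ (α-1) - (((q+1:ℕ):ℝ)+(N:ℝ)) ^ (α-1)) := by
    intro q _
    have := tail_step hα0 hα1 (q+N) (by omega)
    push_cast at this ⊢
    convert this using 3 <;> ring
  calc ∑ q ∈ Finset.range M, (1-α) * ((q:ℝ)+(N:ℝ)+1) ^ (α-2)
      ≤ ∑ q ∈ Finset.range M, ((((q:ℕ):ℝ)+(N:ℝ)) ^ (α-1) - (((q+1:ℕ):ℝ)+(N:ℝ)) ^ (α-1)) :=
        Finset.sum_le_sum hstep
    _ = (((0:ℕ):ℝ)+(N:ℝ)) ^ (α-1) - (((M:ℕ):ℝ)+(N:ℝ)) ^ (α-1) :=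
        Finset.sum_range_sub' (fun q => (((q:ℕ):ℝ)+(N:ℝ)) ^ (α-1)) M
    _ ≤ (N:ℝ) ^ (α-1) := by
        push_cast
        have : (0:ℝ) ≤ ((M:ℝ)+(N:ℝ)) ^ (α-1) := Real.rpow_nonneg (by positivity) _
        simp only [zero_add]
        linarith

set_option maxHeartbeats 1000000 in
lemma R_bound {α : ℝ} (hα0 : 0 < α) (hα1 : α < 1) (N : ℕ) (hN : 1 ≤ N)
    (r : ℝ) (hr0 : 0 ≤ r) (hr1 : r ≤ 1) :
    |∑' q : ℕ, Real.Gamma (((q : ℝ) + (N : ℝ) + 1) - 1 + α) /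
        (Real.Gamma (α - 1) * ((q + N + 1).factorial : ℝ)) * r ^ (q + N + 1)|
      ≤ (N:ℝ) ^ (α-1) := by
  set f : ℕ → ℝ := fun q => Real.Gamma (((q : ℝ) + (N : ℝ) + 1) - 1 + α) /
        (Real.Gamma (α - 1) * ((q + N + 1).factorial : ℝ)) * r ^ (q + N + 1) with hf
  set g : ℕ → ℝ := fun q => (1-α) * ((q:ℝ)+(N:ℝ)+1) ^ (α-2) with hg
  have hfg : ∀ q, |f q| ≤ g q := by
    intro q
    have hcast : ((q : ℝ) + (N : ℝ) + 1) = (((q+N+1 : ℕ)):ℝ) := by push_cast; ring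
    have hc := coeff_bound hα0 hα1 (q+N+1) (by omega)
    have hrpow : |r ^ (q+N+1)| ≤ 1 := by
      rw [abs_pow, abs_of_nonneg hr0]
      exact pow_le_one₀ hr0 hr1
    calc |f q| = |Real.Gamma (((q+N+1:ℕ):ℝ) - 1 + α) /
          (Real.Gamma (α - 1) * ((q + N + 1).factorial : ℝ))| * |r ^ (q+N+1)| := by
            rw [hf, abs_mul, hcast]
      _ ≤ ((1-α) * (((q+N+1:ℕ)):ℝ) ^ (α-2)) * 1 := by
            apply mul_le_mul hc hrpow (abs_nonneg _)
            have : (0:ℝ) < 1 - α := by linarith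
            positivity
      _ = g q := by rw [hg]; push_cast; ring
  have hgsum : Summable g := by
    have h0 : Summable (fun n : ℕ => (n:ℝ) ^ (α-2)) :=
      Real.summable_nat_rpow.mpr (by linarith)
    have h1 : Summable (fun q : ℕ => ((q + (N+1) : ℕ) : ℝ) ^ (α-2)) :=
      (summable_nat_add_iff (N+1)).mpr h0
    have h2 : Summable (fun q : ℕ => ((q:ℝ)+(N:ℝ)+1) ^ (α-2)) := by
      convert h1 using 2 with q
      push_cast; ring
    exact h2.mul_left _
  have hfabs : Summable (fun q => |f q|) :=
    Summable.of_nonneg_of_le (fun q => abs_nonneg _) hfg hgsum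
  calc |∑' q, f q| ≤ ∑' q, |f q| := by
        have h := norm_tsum_le_tsum_norm (f := f) (by simpa [Real.norm_eq_abs] using hfabs)
        simpa [Real.norm_eq_abs] using h
    _ ≤ ∑' q, g q := Summable.tsum_le_tsum hfg hfabs hgsum
    _ ≤ (N:ℝ) ^ (α-1) := tail_sum hα0 hα1 N hN

/-- truncation error bound for the moment expansion.  With
`R_N(τ) = ∑_{p=N+1}^∞ [Γ(p-1+α)/(Γ(α-1)p!)]((τ-a)/(t-a))^p` (reindexed by
`q = p-(N+1)`) and `E_tr(t) = ((t-a)^{1-α}/Γ(2-α)) ∫_a^t R_N(τ) x''(τ) dτ`, one has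
`|E_tr(t)| ≤ L₂ e^{(1-α)²+1-α} (t-a)^{2-α} / (Γ(2-α)(1-α)N^{1-α})`. -/
theorem stmt_12 (a b t α : ℝ) (N : ℕ) (hα0 : 0 < α) (hα1 : α < 1)
    (hab : a < b) (ht : t ∈ Ioc a b) (hN : 1 ≤ N)
    (x : ℝ → ℝ) (hx : ContDiffOn ℝ 2 x (Icc a b)) (L₂ : ℝ)
    (hL : IsGreatest ((fun τ => |iteratedDeriv 2 x τ|) '' Icc a t) L₂) :
    |(t - a) ^ ((1 : ℝ) - α) / Real.Gamma (2 - α) *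
        ∫ τ in a..t,
          (∑' q : ℕ,
              Real.Gamma (((q : ℝ) + (N : ℝ) + 1) - 1 + α) /
                  (Real.Gamma (α - 1) * ((q + N + 1).factorial : ℝ)) *
                ((τ - a) / (t - a)) ^ (q + N + 1)) *
            iteratedDeriv 2 x τ| ≤
      L₂ * Real.exp ((1 - α) ^ 2 + 1 - α) * (t - a) ^ ((2 : ℝ) - α) /
        (Real.Gamma (2 - α) * (1 - α) * (N : ℝ) ^ ((1 : ℝ) - α)) := by
  have hat : a < t := ht.1
  have hta : (0:ℝ) < t - a := by linarith
  have hΓpos : 0 < Real.Gamma (2 - α) := Real.Gamma_pos_of_pos (by linarith)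
  have hL2nonneg : 0 ≤ L₂ := by
    obtain ⟨τ₀, -, hτ₀⟩ := hL.1
    simpa [← hτ₀] using abs_nonneg _
  have hNpos : (0:ℝ) < (N:ℝ) := by exact_mod_cast hN
  -- pointwise bound on the integrand
  have hbound : ∀ τ ∈ Set.uIoc a t,
      ‖(∑' q : ℕ,
          Real.Gamma (((q : ℝ) + (N : ℝ) + 1) - 1 + α) /
              (Real.Gamma (α - 1) * ((q + N + 1).factorial : ℝ)) *
            ((τ - a) / (t - a)) ^ (q + N + 1)) * iteratedDeriv 2 x τ‖
        ≤ (N:ℝ) ^ (α-1) * L₂ := by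
    intro τ hτ
    rw [Set.uIoc_of_le hat.le] at hτ
    have hr0 : 0 ≤ (τ - a) / (t - a) := div_nonneg (by linarith [hτ.1]) hta.le
    have hr1 : (τ - a) / (t - a) ≤ 1 := by
      rw [div_le_one hta]; linarith [hτ.2]
    have hR := R_bound hα0 hα1 N hN _ hr0 hr1
    have hx2 : |iteratedDeriv 2 x τ| ≤ L₂ :=
      hL.2 ⟨τ, ⟨hτ.1.le, hτ.2⟩, rfl⟩
    rw [Real.norm_eq_abs, abs_mul]
    exact mul_le_mul hR hx2 (abs_nonneg _) (Real.rpow_nonneg hNpos.le _)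
  have hint := intervalIntegral.norm_integral_le_of_norm_le_const hbound
  rw [Real.norm_eq_abs, abs_of_pos (by linarith : (0:ℝ) < t - a)] at hint
  rw [abs_mul]
  have h1 : |(t - a) ^ ((1:ℝ) - α) / Real.Gamma (2 - α)|
      = (t - a) ^ ((1:ℝ) - α) / Real.Gamma (2 - α) :=
    abs_of_pos (div_pos (Real.rpow_pos_of_pos hta _) hΓpos)
  rw [h1]
  have h2 : (t - a) ^ ((1:ℝ) - α) / Real.Gamma (2 - α) *
      |∫ τ in a..t, (∑' q : ℕ,
          Real.Gamma (((q : ℝ) + (N : ℝ) + 1) - 1 + α) /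
              (Real.Gamma (α - 1) * ((q + N + 1).factorial : ℝ)) *
            ((τ - a) / (t - a)) ^ (q + N + 1)) * iteratedDeriv 2 x τ|
      ≤ (t - a) ^ ((1:ℝ) - α) / Real.Gamma (2 - α) * ((N:ℝ) ^ (α-1) * L₂ * (t - a)) := by
    apply mul_le_mul_of_nonneg_left _ (le_of_lt (div_pos (Real.rpow_pos_of_pos hta _) hΓpos))
    simpa [Real.norm_eq_abs] using hint
  refine h2.trans ?_
  -- final algebraic comparison
  have hpow : (t - a) ^ ((1:ℝ) - α) * (t - a) = (t - a) ^ ((2:ℝ) - α) := by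
    rw [show (2:ℝ) - α = (1 - α) + 1 by ring, Real.rpow_add hta, Real.rpow_one]
  have hNpow : (N:ℝ) ^ (α - 1) * (N:ℝ) ^ ((1:ℝ) - α) = 1 := by
    rw [← Real.rpow_add hNpos]; norm_num
  have hexp : (1:ℝ) ≤ Real.exp ((1 - α) ^ 2 + 1 - α) := by
    apply Real.one_le_exp
    nlinarith
  have hNv : (0:ℝ) < (N:ℝ) ^ ((1:ℝ) - α) := Real.rpow_pos_of_pos hNpos _
  have hNa : (0:ℝ) < (N:ℝ) ^ (α - 1) := Real.rpow_pos_of_pos hNpos _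
  have lhs_eq : (t - a) ^ ((1:ℝ) - α) / Real.Gamma (2 - α) * ((N:ℝ) ^ (α-1) * L₂ * (t - a))
      = L₂ * (t - a) ^ ((2:ℝ) - α) / (Real.Gamma (2 - α) * (N:ℝ) ^ ((1:ℝ) - α)) := by
    rw [← hpow]
    field_simp
    linear_combination L₂ * hNpow
  rw [lhs_eq]
  rw [div_le_div_iff₀ (by positivity) (mul_pos (mul_pos hΓpos (by linarith)) hNv)]
  have hK : 0 ≤ L₂ * ((t - a) ^ ((2:ℝ) - α) * (Real.Gamma (2 - α) * (N:ℝ) ^ ((1:ℝ) - α))) :=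
    mul_nonneg hL2nonneg (mul_nonneg (Real.rpow_nonneg hta.le _)
      (mul_nonneg hΓpos.le hNv.le))
  nlinarith [mul_le_mul_of_nonneg_left (le_trans (by linarith : (1:ℝ) - α ≤ 1) hexp) hK]
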